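/- The dihedral group D_{2n} is homogeneous (every isomorphism between two subgroups of D_{2n} extends to an automorphism of D_{2n}) if and only if n = 2 or n is odd. -/

import Mathlib

/-- A group is homogeneous if every isomorphism between two of its subgroups
extends to an automorphism of the whole group. -/
def IsHomogeneousGroup (G : Type*) [Group G] : Prop :=
  ∀ (H K : Subgroup G) (φ : H ≃* K), ∃ ψ : G ≃* G, ∀ h : H, ψ (h : G) = (φ h : G)

namespace DihedralHomogeneousAux

open DihedralGroup Subgroup

variable {n : ℕ}

/-- The rotations, as a monoid hom from `Multiplicative (ZMod n)`. -/
def rHom (n : ℕ) : Multiplicative (ZMod n) →* DihedralGroup n where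
  toFun x := DihedralGroup.r x.toAdd
  map_one' := rfl
  map_mul' x y := by
    show r (x.toAdd + y.toAdd) = r x.toAdd * r y.toAdd
    rw [r_mul_r]

lemma r_zpow (x : ZMod n) (q : ℤ) : (r x : DihedralGroup n) ^ q = r (q • x) := by
  have := map_zpow (rHom n) (Multiplicative.ofAdd x) q
  simp [mul_comm]

lemma r_npow (x : ZMod n) (q : ℕ) : (r x : DihedralGroup n) ^ q = r (q • x) := by
  simpa using r_zpow x (q : ℤ)

/-- The standard automorphism family of the dihedral group:
`r i ↦ r (a * i)`, `sr i ↦ sr (a * i + b)` for a unit `a`. -/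
def dAut (a : (ZMod n)ˣ) (b : ZMod n) : DihedralGroup n ≃* DihedralGroup n where
  toFun x := match x with
    | .r i => r ((a : ZMod n) * i)
    | .sr i => sr ((a : ZMod n) * i + b)
  invFun x := match x with
    | .r i => r ((a⁻¹ : (ZMod n)ˣ) * i)
    | .sr i => sr ((a⁻¹ : (ZMod n)ˣ) * (i - b))
  left_inv := by
    rintro (i | i) <;> simp [mul_add, mul_sub]
  right_inv := by
    rintro (i | i) <;> simp [mul_add, mul_sub]
  map_mul' := by
    rintro (i | i) (j | j) <;> simp <;> ring

@[simp] lemma dAut_r (a : (ZMod n)ˣ) (b : ZMod n) (i : ZMod n) :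
    dAut a b (r i) = r ((a : ZMod n) * i) := rfl

@[simp] lemma dAut_sr (a : (ZMod n)ˣ) (b : ZMod n) (i : ZMod n) :
    dAut a b (sr i) = sr ((a : ZMod n) * i + b) := rfl

/-- Every element of `ZMod n` is a unit times the (canonical representative of the)
gcd it determines. -/
lemma exists_unit_gcd (n : ℕ) [NeZero n] (g : ZMod n) :
    ∃ a : (ZMod n)ˣ, (a : ZMod n) * ((Nat.gcd n g.val : ℕ) : ZMod n) = g := by
  set e := Nat.gcd n g.val with he
  have hnpos : 0 < n := Nat.pos_of_ne_zero (NeZero.ne n)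
  have hepos : 0 < e := Nat.gcd_pos_of_pos_left _ hnpos
  have hedvd : e ∣ n := Nat.gcd_dvd_left _ _
  have hgdvd : e ∣ g.val := Nat.gcd_dvd_right _ _
  set t := g.val / e with ht
  have hte : e * t = g.val := Nat.mul_div_cancel' hgdvd
  have hcop : Nat.Coprime t (n / e) :=
    (Nat.coprime_div_gcd_div_gcd hepos).symm
  have hne : NeZero (n / e) := ⟨(Nat.div_pos (Nat.le_of_dvd hnpos hedvd) hepos).ne'⟩
  obtain ⟨a, ha⟩ := ZMod.unitsMap_surjective (Nat.div_dvd_of_dvd hedvd)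
    (ZMod.unitOfCoprime t hcop)
  refine ⟨a, ?_⟩
  have h1 : ((a : ZMod n).val : ZMod (n / e)) = (t : ZMod (n / e)) := by
    have h0 : ((ZMod.unitsMap (Nat.div_dvd_of_dvd hedvd) a : (ZMod (n/e))ˣ) : ZMod (n/e))
        = ((ZMod.unitOfCoprime t hcop : (ZMod (n/e))ˣ) : ZMod (n/e)) := by rw [ha]
    rw [ZMod.coe_unitOfCoprime] at h0
    rw [← h0]
    simp only [ZMod.unitsMap_def, Units.coe_map, MonoidHom.coe_coe]
    rw [ZMod.castHom_apply, ZMod.natCast_val]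
  have h2 : (↑(n / e) : ℤ) ∣ ((a : ZMod n).val : ℤ) - (t : ℤ) :=
    (((ZMod.natCast_eq_natCast_iff _ _ _).mp h1).symm).dvd
  obtain ⟨z, hz⟩ := h2
  have key : ((a : ZMod n) - (t : ZMod n)) * (e : ZMod n) = 0 := by
    have : ((a : ZMod n) - (t : ZMod n)) = ((((a : ZMod n).val : ℤ) - (t : ℤ) : ℤ) : ZMod n) := by
      push_cast
      rw [ZMod.natCast_val, ZMod.cast_id]
    rw [this, hz, Int.cast_mul, Int.cast_natCast]
    have h0 : ((n / e : ℕ) : ZMod n) * (e : ZMod n) = 0 := by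
      rw [← Nat.cast_mul, Nat.div_mul_cancel hedvd, ZMod.natCast_self]
    calc ((n / e : ℕ) : ZMod n) * ((z : ℤ) : ZMod n) * (e : ZMod n)
        = ((n / e : ℕ) : ZMod n) * (e : ZMod n) * ((z : ℤ) : ZMod n) := by ring
      _ = 0 := by rw [h0, zero_mul]
  have : (a : ZMod n) * (e : ZMod n) = (t : ZMod n) * (e : ZMod n) := by
    have h' : (a : ZMod n) * (e : ZMod n) - (t : ZMod n) * (e : ZMod n) = 0 := by
      rw [← sub_mul]; exact key
    exact sub_eq_zero.mp h'
  rw [this, ← Nat.cast_mul, mul_comm t e, hte, ZMod.natCast_val, ZMod.cast_id]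

/-- The odd case: `D_{2n}` is homogeneous when `n` is odd. -/
lemma odd_homogeneous (hn : 0 < n) (hodd : Odd n) :
    IsHomogeneousGroup (DihedralGroup n) := by
  haveI : NeZero n := ⟨hn.ne'⟩
  intro H K φ
  have horder : ∀ z : H, orderOf ((φ z : K) : DihedralGroup n)
      = orderOf ((z : H) : DihedralGroup n) := by
    intro z
    rw [Subgroup.orderOf_coe, Subgroup.orderOf_coe]
    exact orderOf_injective φ.toMonoidHom φ.injective z
  have hdvd : ∀ x : ZMod n, orderOf (r x : DihedralGroup n) ∣ n := by
    intro x
    apply orderOf_dvd_of_pow_eq_one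
    rw [r_npow, nsmul_eq_mul, ZMod.natCast_self, zero_mul]
    rfl
  have hnot2 : ¬ (2 ∣ n) := by
    rw [Nat.odd_iff] at hodd
    omega
  have hrotK : ∀ (x : ZMod n) (hx : r x ∈ H),
      ∃ y, ((φ ⟨r x, hx⟩ : K) : DihedralGroup n) = r y := by
    intro x hx
    cases hval : ((φ ⟨r x, hx⟩ : K) : DihedralGroup n) with
    | r y => exact ⟨y, rfl⟩
    | sr y =>
      exfalso
      have h2 : orderOf ((φ ⟨r x, hx⟩ : K) : DihedralGroup n) = 2 := by
        rw [hval]; exact orderOf_sr y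
      have h3 : orderOf (r x : DihedralGroup n) = 2 := (horder ⟨r x, hx⟩).symm.trans h2
      exact hnot2 (h3 ▸ hdvd x)
  have hsrK : ∀ (x : ZMod n) (hx : sr x ∈ H),
      ∃ y, ((φ ⟨sr x, hx⟩ : K) : DihedralGroup n) = sr y := by
    intro x hx
    cases hval : ((φ ⟨sr x, hx⟩ : K) : DihedralGroup n) with
    | sr y => exact ⟨y, rfl⟩
    | r y =>
      exfalso
      have h2 : orderOf ((φ ⟨sr x, hx⟩ : K) : DihedralGroup n) = 2 :=
        (horder ⟨sr x, hx⟩).trans (orderOf_sr x)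
      rw [hval] at h2
      exact hnot2 (h2 ▸ hdvd y)
  let I : AddSubgroup (ZMod n) :=
    { carrier := {x | r x ∈ H}
      zero_mem' := by show r 0 ∈ H; exact one_def ▸ H.one_mem
      add_mem' := fun {x y} hx hy => by
        show r (x + y) ∈ H; rw [← r_mul_r]; exact H.mul_mem hx hy
      neg_mem' := fun {x} hx => by
        show r (-x) ∈ H
        have h' : (r x : DihedralGroup n)⁻¹ = r (-x) := rfl
        rw [← h']; exact H.inv_mem hx }
  obtain ⟨⟨g, hgI⟩, hgen⟩ := IsAddCyclic.exists_generator (α := I)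
  have hgI' : r g ∈ H := hgI
  have hgen' : ∀ x : ZMod n, r x ∈ H → ∃ q : ℤ, q • g = x := by
    intro x hx
    obtain ⟨q, hq⟩ := AddSubgroup.mem_zmultiples_iff.mp (hgen ⟨x, hx⟩)
    exact ⟨q, by simpa using congrArg Subtype.val hq⟩
  obtain ⟨h, hh⟩ := hrotK g hgI'
  have hord : orderOf (r h : DihedralGroup n) = orderOf (r g : DihedralGroup n) := by
    rw [← hh]; exact horder ⟨r g, hgI'⟩
  have hgcd : Nat.gcd n h.val = Nat.gcd n g.val := by
    rw [DihedralGroup.orderOf_r, DihedralGroup.orderOf_r] at hord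
    have hg1 : Nat.gcd n g.val ∣ n := Nat.gcd_dvd_left _ _
    have hh1 : Nat.gcd n h.val ∣ n := Nat.gcd_dvd_left _ _
    rw [← Nat.div_div_self hh1 hn.ne', hord, Nat.div_div_self hg1 hn.ne']
  obtain ⟨ag, hag⟩ := exists_unit_gcd n g
  obtain ⟨ah, hah⟩ := exists_unit_gcd n h
  have hahg : ((ah * ag⁻¹ : (ZMod n)ˣ) : ZMod n) * g = h := by
    rw [Units.val_mul, ← hag, mul_assoc, Units.inv_mul_cancel_left, ← hgcd, hah]
  set a : (ZMod n)ˣ := ah * ag⁻¹ with ha_def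
  have hrotval : ∀ (x : ZMod n) (hx : r x ∈ H),
      ((φ ⟨r x, hx⟩ : K) : DihedralGroup n) = r ((a : ZMod n) * x) := by
    intro x hx
    obtain ⟨q, hq⟩ := hgen' x hx
    have hx' : (⟨r x, hx⟩ : H) = (⟨r g, hgI'⟩ : H) ^ q := by
      apply Subtype.ext
      rw [SubgroupClass.coe_zpow]
      show r x = (r g : DihedralGroup n) ^ q
      rw [r_zpow, hq]
    rw [hx', map_zpow, SubgroupClass.coe_zpow, hh, r_zpow]
    congr 1
    rw [← hq, ← hahg, mul_smul_comm]
  by_cases hex : ∃ i, sr i ∈ H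
  · obtain ⟨i, hiH⟩ := hex
    obtain ⟨j, hj⟩ := hsrK i hiH
    refine ⟨dAut a (j - (a : ZMod n) * i), ?_⟩
    rintro ⟨(x | x), hx⟩
    · show dAut a (j - (a : ZMod n) * i) (r x) = _
      rw [dAut_r, hrotval x hx]
    · have hr' : r (x - i) ∈ H := by
        have hm := H.mul_mem hiH hx
        rwa [sr_mul_sr] at hm
      have hsplit : (⟨sr x, hx⟩ : H) = ⟨sr i, hiH⟩ * ⟨r (x - i), hr'⟩ := by
        apply Subtype.ext
        show sr x = sr i * r (x - i)
        rw [sr_mul_r]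
        congr 1
        ring
      have hφ : ((φ ⟨sr x, hx⟩ : K) : DihedralGroup n)
          = sr (j + (a : ZMod n) * (x - i)) := by
        rw [hsplit, map_mul, MulMemClass.coe_mul, hj, hrotval _ hr', sr_mul_r]
      rw [hφ]
      show dAut a (j - (a : ZMod n) * i) (sr x) = _
      rw [dAut_sr]
      congr 1
      ring
  · refine ⟨dAut a 0, ?_⟩
    rintro ⟨(x | x), hx⟩
    · show dAut a 0 (r x) = _
      rw [dAut_r, hrotval x hx]
    · exact absurd ⟨x, hx⟩ hex

/-- Automorphism of the Klein four group `D_4` swapping `sr 0` and `sr 1`. -/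
def kleinA : DihedralGroup 2 ≃* DihedralGroup 2 where
  toFun x := if x = sr 0 then sr 1 else if x = sr 1 then sr 0 else x
  invFun x := if x = sr 0 then sr 1 else if x = sr 1 then sr 0 else x
  left_inv := by decide
  right_inv := by decide
  map_mul' := by decide

/-- Automorphism of the Klein four group `D_4` swapping `r 1` and `sr 0`. -/
def kleinB : DihedralGroup 2 ≃* DihedralGroup 2 where
  toFun x := if x = r 1 then sr 0 else if x = sr 0 then r 1 else x
  invFun x := if x = r 1 then sr 0 else if x = sr 0 then r 1 else x
  left_inv := by decide
  right_inv := by decide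
  map_mul' := by decide

lemma klein_trans (u v : DihedralGroup 2) (hu : u ≠ 1) (hv : v ≠ 1) :
    ∃ ψ : DihedralGroup 2 ≃* DihedralGroup 2, ψ u = v := by
  have h3 : ∀ u : DihedralGroup 2, u ≠ 1 → (u = r 1 ∨ u = sr 0 ∨ u = sr 1) := by decide
  rcases h3 u hu with rfl | rfl | rfl <;> rcases h3 v hv with rfl | rfl | rfl
  exacts [⟨MulEquiv.refl _, by decide⟩, ⟨kleinB, by decide⟩, ⟨kleinB.trans kleinA, by decide⟩,
    ⟨kleinB, by decide⟩, ⟨MulEquiv.refl _, by decide⟩, ⟨kleinA, by decide⟩,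
    ⟨kleinA.trans kleinB, by decide⟩, ⟨kleinA, by decide⟩, ⟨MulEquiv.refl _, by decide⟩]

lemma two_homogeneous : IsHomogeneousGroup (DihedralGroup 2) := by
  intro H K φ
  by_cases hH : H = ⊤
  · subst hH
    have hK : K = ⊤ := by
      apply Subgroup.eq_top_of_card_eq
      rw [← Nat.card_congr φ.toEquiv, Subgroup.card_top]
    subst hK
    refine ⟨(Subgroup.topEquiv.symm.trans φ).trans Subgroup.topEquiv, fun h => rfl⟩
  · by_cases hone : ∀ u ∈ H, u = 1
    · refine ⟨MulEquiv.refl _, fun h => ?_⟩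
      have h1' : h = (1 : H) := Subtype.ext (hone _ h.2)
      rw [h1']
      simp
    · push_neg at hone
      obtain ⟨u, huH, hu1⟩ := hone
      have key : ∀ w ∈ H, w = 1 ∨ w = u := by
        intro w hw
        by_contra hcon
        push_neg at hcon
        apply hH
        rw [Subgroup.eq_top_iff']
        have hd : ∀ u w x : DihedralGroup 2, u ≠ 1 → w ≠ 1 → w ≠ u →
            (x = 1 ∨ x = u ∨ x = w ∨ x = u * w) := by decide
        intro x
        rcases hd u w x hu1 hcon.1 hcon.2 with rfl | rfl | rfl | rfl
        · exact H.one_mem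
        · exact huH
        · exact hw
        · exact H.mul_mem huH hw
      set v := ((φ ⟨u, huH⟩ : K) : DihedralGroup 2) with hv
      have hv1 : v ≠ 1 := by
        intro hc
        apply hu1
        have h1 : φ ⟨u, huH⟩ = 1 := Subtype.ext (by rw [← hv]; exact hc)
        have h0 := φ.injective (h1.trans (map_one φ).symm)
        exact congrArg Subtype.val h0
      obtain ⟨ψ, hψ⟩ := klein_trans u v hu1 hv1
      refine ⟨ψ, fun h => ?_⟩
      rcases key h h.2 with h1 | hu
      · have he : h = (1 : H) := Subtype.ext h1
        rw [he]
        simp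
      · have he : h = ⟨u, huH⟩ := Subtype.ext hu
        rw [he]
        exact hψ

lemma exists_mulEquiv_zpowers {G : Type*} [Group G] [Finite G] {x y : G}
    (h : orderOf x = orderOf y) :
    ∃ e : (Subgroup.zpowers x) ≃* (Subgroup.zpowers y),
      (e ⟨x, Subgroup.mem_zpowers x⟩ : G) = y := by
  have hx : ∀ z : Subgroup.zpowers x, ∃ m : ℕ, (z : G) = x ^ m := by
    intro z
    obtain ⟨m, hm⟩ := (Submonoid.mem_powers_iff _ _).mp (mem_powers_iff_mem_zpowers.mpr z.2)
    exact ⟨m, hm.symm⟩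
  let e' : (Subgroup.zpowers x) ≃ (Subgroup.zpowers y) := zpowersEquivZPowers h
  have key : ∀ (m : ℕ) (hm : x ^ m ∈ Subgroup.zpowers x),
      e' ⟨x ^ m, hm⟩ = ⟨y ^ m, ⟨(m : ℤ), zpow_natCast y m⟩⟩ := by
    intro m hm
    show zpowersEquivZPowers h ⟨x ^ m, hm⟩ = _
    have h1 : (⟨x ^ m, hm⟩ : (Subgroup.zpowers x : Set G))
        = ⟨x ^ m, ⟨(m : ℤ), zpow_natCast x m⟩⟩ := Subtype.ext rfl
    rw [h1, zpowersEquivZPowers_apply]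
  refine ⟨MulEquiv.mk' e' ?_, ?_⟩
  · intro z w
    obtain ⟨mz, hz⟩ := hx z
    obtain ⟨mw, hw⟩ := hx w
    have hz' : z = ⟨x ^ mz, Subgroup.pow_mem _ (Subgroup.mem_zpowers x) _⟩ := Subtype.ext hz
    have hw' : w = ⟨x ^ mw, Subgroup.pow_mem _ (Subgroup.mem_zpowers x) _⟩ := Subtype.ext hw
    rw [hz', hw']
    have hzw : ((⟨x ^ mz, Subgroup.pow_mem _ (Subgroup.mem_zpowers x) _⟩ : Subgroup.zpowers x)
        * ⟨x ^ mw, Subgroup.pow_mem _ (Subgroup.mem_zpowers x) _⟩ : Subgroup.zpowers x)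
        = ⟨x ^ (mz + mw), Subgroup.pow_mem _ (Subgroup.mem_zpowers x) _⟩ :=
      Subtype.ext (pow_add x mz mw).symm
    rw [hzw, key, key, key]
    exact Subtype.ext (pow_add y mz mw)
  · have h1 : (⟨x, Subgroup.mem_zpowers x⟩ : Subgroup.zpowers x)
        = ⟨x ^ 1, Subgroup.pow_mem _ (Subgroup.mem_zpowers x) _⟩ := Subtype.ext (pow_one x).symm
    show ((e' ⟨x, Subgroup.mem_zpowers x⟩ : _) : G) = y
    rw [h1, key]
    exact pow_one y

lemma not_homogeneous_of_even (hn4 : 4 ≤ n) (heven : 2 ∣ n) :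
    ¬ IsHomogeneousGroup (DihedralGroup n) := by
  haveI : NeZero n := ⟨by omega⟩
  intro hhom
  obtain ⟨k, hk⟩ := heven
  have hk0 : ((k : ZMod n) + k) = 0 := by
    rw [← Nat.cast_add, show k + k = n by omega, ZMod.natCast_self]
  set c : DihedralGroup n := r (k : ZMod n) with hc
  have hc2 : c ^ 2 = 1 := by
    rw [pow_two, hc, r_mul_r, hk0]
    rfl
  have hc1 : c ≠ 1 := by
    intro hcon
    rw [hc, one_def] at hcon
    have : (k : ZMod n) = 0 := by injection hcon
    have hdvd := (ZMod.natCast_eq_zero_iff k n).mp this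
    have := Nat.le_of_dvd (by omega) hdvd
    omega
  have hcord : orderOf c = 2 := orderOf_eq_prime hc2 hc1
  obtain ⟨e, he⟩ := exists_mulEquiv_zpowers
    (x := c) (y := sr (0 : ZMod n)) (hcord.trans (orderOf_sr 0).symm)
  obtain ⟨ψ, hψ⟩ := hhom _ _ e
  have hψc : ψ c = sr 0 := by
    have := hψ ⟨c, Subgroup.mem_zpowers c⟩
    rw [this, he]
  have hcent : ∀ gg : DihedralGroup n, gg * c = c * gg := by
    rintro (j | j)
    · rw [hc, r_mul_r, r_mul_r, add_comm]
    · rw [hc, sr_mul_r, r_mul_sr]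
      congr 1
      have hnegk : -(k : ZMod n) = k := neg_eq_of_add_eq_zero_left hk0
      rw [sub_eq_add_neg, hnegk]
  have hscent : ∀ gg : DihedralGroup n, gg * sr 0 = sr 0 * gg := by
    intro gg
    have h1 := congrArg ψ (hcent (ψ.symm gg))
    rw [map_mul, map_mul, hψc, MulEquiv.apply_symm_apply] at h1
    exact h1
  have hcontra := hscent (r 1)
  rw [r_mul_sr, sr_mul_r] at hcontra
  have h2 : (0 - 1 : ZMod n) = 0 + 1 := by injection hcontra
  have h3 : ((2 : ℕ) : ZMod n) = 0 := by
    push_cast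
    linear_combination -h2
  have hdvd := (ZMod.natCast_eq_zero_iff 2 n).mp h3
  have := Nat.le_of_dvd (by omega) hdvd
  omega

end DihedralHomogeneousAux

/-- The dihedral group `D_{2n}` is homogeneous if and only if `n = 2` or `n` is odd. -/
theorem dihedral_homogeneous_iff (n : ℕ) (hn : 0 < n) :
    IsHomogeneousGroup (DihedralGroup n) ↔ n = 2 ∨ Odd n := by
  constructor
  · intro hhom
    by_contra hcon
    push_neg at hcon
    obtain ⟨hne2, hnodd⟩ := hcon
    rw [Nat.odd_iff] at hnodd
    have heven : 2 ∣ n := by omega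
    have h4 : 4 ≤ n := by
      obtain ⟨k, hk⟩ := heven
      omega
    exact DihedralHomogeneousAux.not_homogeneous_of_even h4 heven hhom
  · rintro (rfl | hodd)
    · exact DihedralHomogeneousAux.two_homogeneous
    · exact DihedralHomogeneousAux.odd_homogeneous hn hodd
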